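/- Let K be a differential field of characteristic zero and t a primitive generator over K. If f ∈ K(t) is t-proper, then f − hp_t(f) ∈ K(t)′, where hp_t(f) is the Hermitian part of f, i.e., the unique t-simple element of K(t) congruent to f modulo K(t)′ + K[t]. -/

import Mathlib

set_option maxHeartbeats 1000000

open Polynomial

section Helpers

variable {F : Type*} [Field F]

theorem myδ_zero (δ : F → F) (hδadd : ∀ a b : F, δ (a + b) = δ a + δ b) : δ 0 = 0 := by
  have h : δ 0 = δ 0 + δ 0 := by simpa using (hδadd 0 0).symm
  exact (left_eq_add.mp h)

theorem myδ_one (δ : F → F) (hδmul : ∀ a b : F, δ (a * b) = δ a * b + a * δ b) : δ 1 = 0 := by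
  have h : δ 1 = δ 1 + δ 1 := by simpa using (hδmul 1 1).symm
  exact (left_eq_add.mp h)

theorem myδ_neg (δ : F → F) (hδadd : ∀ a b : F, δ (a + b) = δ a + δ b) (x : F) :
    δ (-x) = - δ x := by
  have h : δ x + δ (-x) = 0 := by
    rw [← hδadd, add_neg_cancel, myδ_zero δ hδadd]
  exact eq_neg_of_add_eq_zero_right h

theorem myδ_sub (δ : F → F) (hδadd : ∀ a b : F, δ (a + b) = δ a + δ b) (x y : F) :
    δ (x - y) = δ x - δ y := by
  rw [sub_eq_add_neg, hδadd, myδ_neg δ hδadd, sub_eq_add_neg]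

theorem myδ_div (δ : F → F) (hδmul : ∀ a b : F, δ (a * b) = δ a * b + a * δ b)
    (x y : F) (hy : y ≠ 0) :
    δ (x / y) = (δ x * y - x * δ y) / (y * y) := by
  set z := x / y with hzdef
  have hx : z * y = x := div_mul_cancel₀ x hy
  rw [← hx, hδmul]
  field_simp
  ring

theorem myδ_pow (δ : F → F) (hδadd : ∀ a b : F, δ (a + b) = δ a + δ b)
    (hδmul : ∀ a b : F, δ (a * b) = δ a * b + a * δ b) (t : F) (n : ℕ) :
    δ (t ^ n) = n * t ^ (n - 1) * δ t := by
  induction n with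
  | zero => simp [myδ_one δ hδmul]
  | succ n ih =>
      rw [pow_succ, hδmul, ih]
      cases n with
      | zero => simp
      | succ m =>
          rw [show m + 1 - 1 = m from rfl, show m + 1 + 1 - 1 = m + 1 from rfl]
          push_cast
          ring

end Helpers

section DPoly

variable {F : Type*} [Field F] (δ : F → F) (K : Subfield F)

noncomputable def Dpoly (hK : ∀ a ∈ K, δ a ∈ K) (t' : K) (p : Polynomial K) : Polynomial K :=
  p.sum (fun n a => C (⟨δ a, hK a a.2⟩ : K) * X ^ n) + C t' * derivative p

theorem Dpoly_degree_le (hK : ∀ a ∈ K, δ a ∈ K) (t' : K) (p : Polynomial K) :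
    (Dpoly δ K hK t' p).degree ≤ p.degree := by
  refine (degree_add_le _ _).trans (max_le ?_ ?_)
  · rw [Polynomial.sum_def]
    refine (degree_sum_le _ _).trans (Finset.sup_le fun n hn => ?_)
    exact (degree_C_mul_X_pow_le n _).trans (le_degree_of_ne_zero (mem_support_iff.mp hn))
  · refine (degree_mul_le _ _).trans ?_
    refine le_trans (add_le_add degree_C_le (degree_derivative_le)) ?_
    simp

theorem Dpoly_spec (hδadd : ∀ a b : F, δ (a + b) = δ a + δ b)
    (hδmul : ∀ a b : F, δ (a * b) = δ a * b + a * δ b)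
    (hK : ∀ a ∈ K, δ a ∈ K) (t : F) (t' : K) (ht' : (t' : F) = δ t) (p : Polynomial K) :
    δ (aeval t p) = aeval t (Dpoly δ K hK t' p) := by
  have hz : ∀ n : ℕ, C (⟨δ ((0 : K) : F), hK _ (0 : K).2⟩ : K) * X ^ n = (0 : Polynomial K) := by
    intro n
    have : (⟨δ ((0 : K) : F), hK _ (0 : K).2⟩ : K) = 0 := Subtype.ext (by
      simpa using myδ_zero δ hδadd)
    rw [this, C_0, zero_mul]
  induction p using Polynomial.induction_on' with
  | add p q hp hq =>
      have hD : Dpoly δ K hK t' (p + q) = Dpoly δ K hK t' p + Dpoly δ K hK t' q := by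
        unfold Dpoly
        rw [Polynomial.sum_add_index _ _ _ (fun i => hz i) ?_, derivative_add, mul_add]
        · exact add_add_add_comm _ _ _ _
        · intro n a b
          have : (⟨δ (((a + b) : K) : F), hK _ (a + b).2⟩ : K)
              = ⟨δ (a : F), hK _ a.2⟩ + ⟨δ (b : F), hK _ b.2⟩ := Subtype.ext (by
            push_cast
            rw [hδadd])
          rw [this, C_add, add_mul]
      rw [map_add, hδadd, hp, hq, hD, map_add]
  | monomial n a =>
      have hD : Dpoly δ K hK t' (monomial n a)
          = C (⟨δ (a : F), hK _ a.2⟩ : K) * X ^ n + C t' * monomial (n - 1) (a * n) := by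
        unfold Dpoly
        rw [Polynomial.sum_monomial_index _ _ (hz n), derivative_monomial]
      rw [hD, aeval_monomial]
      simp only [map_add, map_mul, aeval_C, map_pow, aeval_X, aeval_monomial]
      rw [hδmul, myδ_pow δ hδadd hδmul]
      have hcoe : ∀ x : K, algebraMap (↥K) F x = (x : F) := fun x => rfl
      rw [hcoe, hcoe, hcoe, hcoe, ht']
      push_cast
      ring

end DPoly
/-- Let `K` be a differential field of characteristic zero and `t` a primitive
generator over `K`, with `F = K(t)`.  If `f ∈ K(t)` is `t`-proper and `h` is
its Hermitian part (the unique `t`-simple element with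
`f − h ∈ K(t)′ + K[t]`), then in fact `f − h ∈ K(t)′`. -/
theorem proper_minus_hermitian_part_is_derivative (F : Type*) [Field F] [CharZero F]
    (δ : F → F)
    (hδadd : ∀ a b : F, δ (a + b) = δ a + δ b)
    (hδmul : ∀ a b : F, δ (a * b) = δ a * b + a * δ b)
    (K : Subfield F) (hK : ∀ a ∈ K, δ a ∈ K)
    (t : F) (htr : Transcendental ↥K t) (ht : δ t ∈ K)
    (hgen : Subfield.closure ((K : Set F) ∪ {t}) = ⊤)
    (hnewconst : ∀ c : F, δ c = 0 → c ∈ K)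
    (f h : F)
    (hproper : ∃ p q : Polynomial ↥K, q ≠ 0 ∧ p.degree < q.degree ∧
      f = Polynomial.aeval t p / Polynomial.aeval t q)
    (hsimple : ∃ p q : Polynomial ↥K, q ≠ 0 ∧ p.degree < q.degree ∧ Squarefree q ∧
      h = Polynomial.aeval t p / Polynomial.aeval t q)
    (hcongr : ∃ (w : F) (r : Polynomial ↥K), f - h = δ w + Polynomial.aeval t r) :
    ∃ w : F, f - h = δ w := by
  classical
  obtain ⟨w0, r, hwr⟩ := hcongr
  set t' : K := ⟨δ t, ht⟩ with ht'
  -- basic facts about aeval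
  have haeval_ne : ∀ q : Polynomial ↥K, q ≠ 0 → aeval t q ≠ 0 :=
    fun q hq h0 => hq (transcendental_iff.mp htr q h0)
  have haeval_inj : ∀ p q : Polynomial ↥K, aeval t p = aeval t q → p = q := by
    intro p q hpq
    have h0 : aeval t (p - q) = 0 := by rw [map_sub, hpq, sub_self]
    have := transcendental_iff.mp htr (p - q) h0
    exact sub_eq_zero.mp this
  -- the properness predicate
  set P : F → Prop := fun x => ∃ p q : Polynomial ↥K, q ≠ 0 ∧ p.degree < q.degree ∧
    x = aeval t p / aeval t q with hP
  have hPneg : ∀ x, P x → P (-x) := by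
    rintro x ⟨p, q, hq, hd, rfl⟩
    exact ⟨-p, q, hq, by simpa using hd, by rw [map_neg, neg_div]⟩
  have hPadd : ∀ x y, P x → P y → P (x + y) := by
    rintro x y ⟨p1, q1, hq1, hd1, rfl⟩ ⟨p2, q2, hq2, hd2, rfl⟩
    refine ⟨p1 * q2 + p2 * q1, q1 * q2, mul_ne_zero hq1 hq2, ?_, ?_⟩
    · refine (degree_add_le _ _).trans_lt (max_lt ?_ ?_)
      · rw [degree_mul, degree_mul]
        exact WithBot.add_lt_add_right (fun hb => hq2 (degree_eq_bot.mp hb)) hd1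
      · rw [degree_mul, degree_mul, add_comm (degree q1)]
        exact WithBot.add_lt_add_right (fun hb => hq1 (degree_eq_bot.mp hb)) hd2
    · rw [map_add, map_mul, map_mul, map_mul]
      field_simp [haeval_ne q1 hq1, haeval_ne q2 hq2]
  have hPsub : ∀ x y, P x → P y → P (x - y) := by
    intro x y hx hy
    rw [sub_eq_add_neg]
    exact hPadd _ _ hx (hPneg _ hy)
  have hPδ : ∀ x, P x → P (δ x) := by
    rintro x ⟨p, q, hq, hd, rfl⟩
    have hqb : degree q ≠ ⊥ := fun hb => hq (degree_eq_bot.mp hb)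
    refine ⟨Dpoly δ K hK t' p * q - p * Dpoly δ K hK t' q, q * q, mul_ne_zero hq hq, ?_, ?_⟩
    · refine (degree_sub_le _ _).trans_lt (max_lt ?_ ?_)
      · refine (degree_mul_le _ _).trans_lt ?_
        rw [degree_mul]
        exact WithBot.add_lt_add_right hqb ((Dpoly_degree_le δ K hK t' p).trans_lt hd)
      · refine (degree_mul_le _ _).trans_lt ?_
        rw [degree_mul]
        exact lt_of_le_of_lt (add_le_add_right (Dpoly_degree_le δ K hK t' q) _)
          (WithBot.add_lt_add_right hqb hd)
    · rw [myδ_div δ hδmul _ _ (haeval_ne q hq), map_sub, map_mul, map_mul, map_mul,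
        ← Dpoly_spec δ K hδadd hδmul hK t t' rfl p, ← Dpoly_spec δ K hδadd hδmul hK t t' rfl q]
  have hPzero : ∀ x, P x → (∃ s : Polynomial ↥K, x = aeval t s) → x = 0 := by
    rintro x ⟨p, q, hq, hd, rfl⟩ ⟨s, hs⟩
    by_cases hs0 : s = 0
    · rw [hs, hs0, map_zero]
    · exfalso
      have hmul : aeval t (s * q) = aeval t p := by
        rw [map_mul, ← hs]
        field_simp [haeval_ne q hq]
      have hsq : s * q = p := haeval_inj _ _ hmul
      have : degree q ≤ degree p := by
        rw [← hsq, degree_mul]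
        calc degree q = 0 + degree q := (zero_add _).symm
          _ ≤ degree s + degree q :=
            add_le_add_left (zero_le_degree_iff.mpr hs0) _
      exact absurd hd (not_lt.mpr this)
  -- decompose w0 as a ratio of polynomials in t
  have hw0mem : w0 ∈ Subfield.closure ((K : Set F) ∪ {t}) := by rw [hgen]; trivial
  rw [Subfield.mem_closure_iff] at hw0mem
  obtain ⟨y, hy, z, hz, hyz⟩ := hw0mem
  have hrange : ∀ x : F, x ∈ Subring.closure ((K : Set F) ∪ {t}) →
      ∃ a : Polynomial ↥K, aeval t a = x := by
    intro x hx
    induction hx using Subring.closure_induction with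
    | mem x hx =>
        rcases hx with hx | hx
        · exact ⟨C ⟨x, hx⟩, aeval_C _ _⟩
        · rw [Set.mem_singleton_iff] at hx
          exact ⟨X, by rw [aeval_X, hx]⟩
    | zero => exact ⟨0, map_zero _⟩
    | one => exact ⟨1, map_one _⟩
    | add x y _ _ hx hy =>
        obtain ⟨a, ha⟩ := hx; obtain ⟨b, hb⟩ := hy
        exact ⟨a + b, by rw [map_add, ha, hb]⟩
    | neg x _ hx =>
        obtain ⟨a, ha⟩ := hx
        exact ⟨-a, by rw [map_neg, ha]⟩
    | mul x y _ _ hx hy =>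
        obtain ⟨a, ha⟩ := hx; obtain ⟨b, hb⟩ := hy
        exact ⟨a * b, by rw [map_mul, ha, hb]⟩
  obtain ⟨a0, ha0⟩ := hrange y hy
  obtain ⟨b0, hb0⟩ := hrange z hz
  obtain ⟨a, b, hb, hw0⟩ : ∃ a b : Polynomial ↥K, b ≠ 0 ∧ w0 = aeval t a / aeval t b := by
    by_cases hb0z : b0 = 0
    · refine ⟨0, 1, one_ne_zero, ?_⟩
      rw [← hyz, ← hb0, hb0z, map_zero, div_zero]
      simp
    · exact ⟨a0, b0, hb0z, by rw [← hyz, ha0, hb0]⟩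
  -- make the denominator monic
  set u : ↥K := (leadingCoeff b)⁻¹ with hu
  have hu0 : u ≠ 0 := inv_ne_zero (leadingCoeff_ne_zero.mpr hb)
  set b' : Polynomial ↥K := b * C u with hb'
  have hb'm : b'.Monic := monic_mul_leadingCoeff_inv hb
  have hb'0 : b' ≠ 0 := hb'm.ne_zero
  set a' : Polynomial ↥K := a * C u with ha'
  have hw0' : w0 = aeval t a' / aeval t b' := by
    rw [hw0, ha', hb', map_mul, map_mul]
    rw [mul_div_mul_right]
    intro hC
    exact haeval_ne (C u) (by simpa using hu0) hC
  -- polynomial division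
  set c : Polynomial ↥K := a' /ₘ b' with hc
  set r0 : Polynomial ↥K := a' %ₘ b' with hr0
  have hdiv : r0 + b' * c = a' := modByMonic_add_div a' b'
  have hr0d : r0.degree < b'.degree := degree_modByMonic_lt a' hb'm
  set u0 : F := aeval t r0 / aeval t b' with hu0def
  have hPu0 : P u0 := ⟨r0, b', hb'0, hr0d, rfl⟩
  have hsplit : w0 = aeval t c + u0 := by
    rw [hw0', hu0def, ← hdiv, map_add, map_mul]
    field_simp [haeval_ne b' hb'0]
    ring
  have hδw0 : δ w0 = aeval t (Dpoly δ K hK t' c) + δ u0 := by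
    rw [hsplit, hδadd, Dpoly_spec δ K hδadd hδmul hK t t' rfl c]
  -- the key cancellation
  have hkey : f - h - δ u0 = aeval t (Dpoly δ K hK t' c + r) := by
    rw [map_add, hwr, hδw0]
    ring
  have hPf : P f := hproper
  have hPh : P h := by
    obtain ⟨p, q, hq, hd, _, heq⟩ := hsimple
    exact ⟨p, q, hq, hd, heq⟩
  have hPfh : P (f - h - δ u0) := hPsub _ _ (hPsub _ _ hPf hPh) (hPδ _ hPu0)
  have hz2 : f - h - δ u0 = 0 := hPzero _ hPfh ⟨_, hkey⟩
  exact ⟨u0, by linear_combination hz2⟩
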